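/- arXiv:1512.05524 — 3 statements merged into one kernel-verified Lean document; each statement's English description precedes it below -/
import Mathlib

section
/- For a half-space Π = {z ∈ ℂⁿ : Re⟨z - p, ν⟩ < 0} (with ν ≠ 0), any point z ∈ Π, and any vector X ∈ ℂⁿ, the Carathéodory metric of Π equals 1/(2 d_Π(z;X)): γ_Π(z;X) = 1/(2 d_Π(z;X)), with the convention that the right-hand side is 0 when d_Π(z;X) = ∞. -/
open Set Metric
open scoped ENNReal

/-- Carathéodory metric of `D` at `z` in direction `X`, valued in `[0,∞]`. -/
noncomputable def carath {E : Type*} [NormedAddCommGroup E] [NormedSpace ℂ E]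
    (D : Set E) (z X : E) : ℝ≥0∞ :=
  ⨆ f ∈ {f : E → ℂ | DifferentiableOn ℂ f D ∧ MapsTo f D (ball (0:ℂ) 1)},
    ENNReal.ofReal ‖fderiv ℂ f z X‖

/-- Kobayashi metric of `D` at `z` in direction `X`, valued in `[0,∞]` (`inf ∅ = ∞`). -/
noncomputable def kob {E : Type*} [NormedAddCommGroup E] [NormedSpace ℂ E]
    (D : Set E) (z X : E) : ℝ≥0∞ :=
  sInf {c : ℝ≥0∞ | ∃ α : ℂ, c = ENNReal.ofReal ‖α‖ ∧
    ∃ φ : ℂ → E, DifferentiableOn ℂ φ (ball (0:ℂ) 1) ∧ MapsTo φ (ball (0:ℂ) 1) D ∧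
      φ 0 = z ∧ α • (fderiv ℂ φ 0 1) = X}

/-- Distance from `z` to `∂D` in the direction `X`, valued in `(0,∞]` (for `z ∈ D` open). -/
noncomputable def dirDist {E : Type*} [NormedAddCommGroup E] [NormedSpace ℂ E]
    (D : Set E) (z X : E) : ℝ≥0∞ :=
  sSup {c : ℝ≥0∞ | ∃ r : ℝ, 0 < r ∧ c = ENNReal.ofReal r ∧
    ∀ lam : ℂ, ‖lam‖ < r → z + lam • X ∈ D}

open Complex

lemma normSq_lt_one_of_norm_lt_one {w : ℂ} (hw : ‖w‖ < 1) : Complex.normSq w < 1 := by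
  rw [Complex.normSq_eq_norm_sq]
  nlinarith [norm_nonneg w]

lemma mobius_lt_one {w0 w : ℂ} (h0 : ‖w0‖ < 1) (hw : ‖w‖ < 1) :
    ‖w - w0‖ < ‖1 - (starRingEnd ℂ) w0 * w‖ := by
  have key : Complex.normSq (1 - (starRingEnd ℂ) w0 * w) - Complex.normSq (w - w0)
      = (1 - Complex.normSq w) * (1 - Complex.normSq w0) := by
    simp [Complex.normSq_apply, Complex.mul_re, Complex.mul_im]
    ring
  have h1 := normSq_lt_one_of_norm_lt_one hw
  have h2 := normSq_lt_one_of_norm_lt_one h0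
  have hpos : Complex.normSq (w - w0) < Complex.normSq (1 - (starRingEnd ℂ) w0 * w) := by
    nlinarith
  have e1 : Complex.normSq (w - w0) = ‖w - w0‖ ^ 2 := by
    rw [Complex.normSq_eq_norm_sq]
  have e2 : Complex.normSq (1 - (starRingEnd ℂ) w0 * w) = ‖1 - (starRingEnd ℂ) w0 * w‖ ^ 2 := by
    rw [Complex.normSq_eq_norm_sq]
  rw [e1, e2] at hpos
  exact lt_of_pow_lt_pow_left₀ 2 (norm_nonneg _) hpos

/-- Schwarz–Pick at the origin, weak form: a holomorphic self-map of the unit disc has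
`‖deriv h 0‖ ≤ 1`. -/
lemma schwarz_pick_zero {h : ℂ → ℂ} (hd : DifferentiableOn ℂ h (ball (0:ℂ) 1))
    (hm : MapsTo h (ball (0:ℂ) 1) (ball (0:ℂ) 1)) : ‖deriv h 0‖ ≤ 1 := by
  have h0mem : (0:ℂ) ∈ ball (0:ℂ) 1 := mem_ball_self one_pos
  set w0 : ℂ := h 0 with hw0
  have hw0m : ‖w0‖ < 1 := by simpa using hm h0mem
  set c : ℂ := (starRingEnd ℂ) w0 with hc
  set M : ℂ → ℂ := fun w => (w - w0) / (1 - c * w) with hM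
  have hden : ∀ w : ℂ, ‖w‖ < 1 → 1 - c * w ≠ 0 := by
    intro w hw
    have : ‖c * w‖ < 1 := by
      rw [norm_mul]
      calc ‖c‖ * ‖w‖ ≤ 1 * ‖w‖ := by
            apply mul_le_mul_of_nonneg_right _ (norm_nonneg w)
            simpa [hc] using hw0m.le
        _ < 1 := by simpa using hw
    intro hzero
    have h1 : (1:ℂ) = c * w := by linear_combination hzero
    rw [← h1, norm_one] at this
    exact lt_irrefl 1 this
  have hMdiff : DifferentiableOn ℂ M (ball (0:ℂ) 1) := by
    intro w hw
    have hw' : ‖w‖ < 1 := by simpa using hw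
    exact (((differentiableAt_id.sub_const w0).div
      ((differentiableAt_const (1:ℂ)).sub ((differentiableAt_const c).mul differentiableAt_id))
      (hden w hw')).differentiableWithinAt)
  have hMmaps : MapsTo M (ball (0:ℂ) 1) (ball (0:ℂ) 1) := by
    intro w hw
    have hw' : ‖w‖ < 1 := by simpa using hw
    have hlt := mobius_lt_one hw0m hw'
    have hdenpos : 0 < ‖1 - c * w‖ := lt_of_le_of_lt (norm_nonneg _) hlt
    simp only [mem_ball, dist_zero_right, hM]
    rw [norm_div]
    exact (div_lt_one hdenpos).mpr hlt
  -- derivative of M at w0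
  have hMder : HasDerivAt M ((1 - c * w0)⁻¹) w0 := by
    have h1 : HasDerivAt (fun w : ℂ => w - w0) 1 w0 := (hasDerivAt_id w0).sub_const w0
    have h2 : HasDerivAt (fun w : ℂ => 1 - c * w) (-c) w0 := by
      simpa using ((hasDerivAt_id w0).const_mul c).const_sub 1
    have hne : (1 : ℂ) - c * w0 ≠ 0 := hden w0 hw0m
    have := h1.div h2 hne
    refine this.congr_deriv ?_
    rw [show ((1:ℂ) - c * w0) ^ 2 = (1 - c * w0) * (1 - c * w0) by ring]
    field_simp
    ring
  have hhd : DifferentiableAt ℂ h 0 := hd.differentiableAt (isOpen_ball.mem_nhds h0mem)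
  have hhder : HasDerivAt h (deriv h 0) 0 := hhd.hasDerivAt
  have hcomp : HasDerivAt (M ∘ h) ((1 - c * w0)⁻¹ * deriv h 0) 0 := hMder.comp 0 hhder
  have hgd : DifferentiableOn ℂ (M ∘ h) (ball (0:ℂ) 1) := hMdiff.comp hd hm
  have hg0 : (M ∘ h) 0 = 0 := by simp [hM, Function.comp, ← hw0]
  have hgm : MapsTo (M ∘ h) (ball (0:ℂ) 1) (ball ((M ∘ h) 0) 1) := by
    rw [hg0]; exact hMmaps.comp hm
  have hbound : ‖deriv (M ∘ h) 0‖ ≤ 1 / 1 :=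
    Complex.norm_deriv_le_div_of_mapsTo_ball hgd (hgm.mono_right ball_subset_closedBall) one_pos
  rw [hcomp.deriv] at hbound
  have hcw : c * w0 = (Complex.normSq w0 : ℝ) := by
    rw [hc, mul_comm, Complex.mul_conj]
  have hnorm : ‖(1 - c * w0)⁻¹‖ = (1 - Complex.normSq w0)⁻¹ := by
    rw [norm_inv, hcw,
      show (1:ℂ) - ((Complex.normSq w0 : ℝ) : ℂ) = (((1 - Complex.normSq w0 : ℝ)) : ℂ) by
        push_cast; ring,
      Complex.norm_real, Real.norm_eq_abs,
      _root_.abs_of_nonneg (by linarith [normSq_lt_one_of_norm_lt_one hw0m])]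
  rw [norm_mul, hnorm] at hbound
  have hsq := normSq_lt_one_of_norm_lt_one hw0m
  have hsq0 := Complex.normSq_nonneg w0
  have h1pos : 0 < 1 - Complex.normSq w0 := by linarith
  calc ‖deriv h 0‖ = (1 - Complex.normSq w0) * ((1 - Complex.normSq w0)⁻¹ * ‖deriv h 0‖) := by
        field_simp
    _ ≤ (1 - Complex.normSq w0) * (1/1) := by
        apply mul_le_mul_of_nonneg_left hbound h1pos.le
    _ ≤ 1 := by nlinarith

section HS
variable {E : Type*} [NormedAddCommGroup E] [NormedSpace ℂ E]
variable (L : E →L[ℂ] ℂ) (c : ℂ)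

lemma hs_open : IsOpen {w : E | (L w + c).re < 0} := by
  have : {w : E | (L w + c).re < 0} = (fun w : E => (L w + c).re) ⁻¹' (Iio 0) := rfl
  rw [this]
  exact isOpen_Iio.preimage (Complex.continuous_re.comp (L.continuous.add continuous_const))

lemma hs_one_add_ne {lam : ℂ} (h : ‖lam‖ < 1) : (1 : ℂ) + lam ≠ 0 := by
  intro h0
  have : lam = -1 := by linear_combination h0
  rw [this] at h
  simp at h

lemma hs_q_re_pos {lam : ℂ} (h : ‖lam‖ < 1) : 0 < ((1 - lam) / (1 + lam)).re := by
  have hne := hs_one_add_ne h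
  have hns : 0 < Complex.normSq (1 + lam) := Complex.normSq_pos.mpr hne
  have h2 := normSq_lt_one_of_norm_lt_one h
  rw [Complex.div_re, ← add_div]
  apply div_pos _ hns
  have : (1 - lam).re * (1 + lam).re + (1 - lam).im * (1 + lam).im
      = 1 - Complex.normSq lam := by
    simp [Complex.normSq_apply]
    ring
  rw [this]
  linarith

end HS

section HS2
variable {E : Type*} [NormedAddCommGroup E] [NormedSpace ℂ E]

lemma hs_fderiv_bound (L : E →L[ℂ] ℂ) (c : ℂ) {z X : E}
    (hz : (L z + c).re < 0) (hb : L X ≠ 0) {f : E → ℂ}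
    (hfd : DifferentiableOn ℂ f {w : E | (L w + c).re < 0})
    (hfm : MapsTo f {w : E | (L w + c).re < 0} (ball (0:ℂ) 1)) :
    ‖fderiv ℂ f z X‖ ≤ ‖L X‖ / (2 * (-(L z + c).re)) := by
  set a : ℂ := L z + c with ha
  set b : ℂ := L X with hbdef
  set t : ℝ := -a.re with htdef
  have ht : 0 < t := by simp [htdef]; linarith
  have hbpos : 0 < ‖b‖ := norm_pos_iff.mpr hb
  set ψ : ℂ → ℂ := fun lam => (a.re : ℂ) * ((1 - lam) / (1 + lam)) + (a.im : ℂ) * Complex.I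
    with hψ
  have hψ0 : ψ 0 = a := by
    simp [hψ, Complex.re_add_im]
  have hψre : ∀ lam : ℂ, ‖lam‖ < 1 → (ψ lam).re < 0 := by
    intro lam hlam
    have hq := hs_q_re_pos hlam
    have : (ψ lam).re = a.re * ((1 - lam) / (1 + lam)).re := by
      simp [hψ, Complex.add_re, Complex.mul_re]
    rw [this]
    have : a.re < 0 := by linarith
    exact mul_neg_of_neg_of_pos this hq
  have hψdiffAt : ∀ lam : ℂ, ‖lam‖ < 1 → DifferentiableAt ℂ ψ lam := by
    intro lam hlam
    have hne := hs_one_add_ne hlam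
    exact ((((differentiableAt_const (1:ℂ)).sub differentiableAt_id).div
      ((differentiableAt_const (1:ℂ)).add differentiableAt_id) hne).const_mul _).add_const _
  have hψder : HasDerivAt ψ ((a.re : ℂ) * (-2)) 0 := by
    have h1 : HasDerivAt (fun lam : ℂ => 1 - lam) (-1) 0 := by
      simpa using (hasDerivAt_id (0:ℂ)).const_sub 1
    have h2 : HasDerivAt (fun lam : ℂ => 1 + lam) 1 0 := by
      simpa using (hasDerivAt_id (0:ℂ)).const_add 1
    have h3 := h1.div h2 (by norm_num)
    have h4 : HasDerivAt (fun lam : ℂ => (1 - lam) / (1 + lam)) (-2) 0 := by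
      exact h3.congr_deriv (by norm_num)
    simpa [hψ] using (h4.const_mul ((a.re : ℂ))).add_const ((a.im : ℂ) * Complex.I)
  set φ : ℂ → E := fun lam => z + ((ψ lam - a) / b) • X with hφ
  have hφ0 : φ 0 = z := by simp [hφ, hψ0]
  have hφL : ∀ lam : ℂ, L (φ lam) + c = ψ lam := by
    intro lam
    have : L (φ lam) = L z + ((ψ lam - a) / b) * b := by
      simp [hφ, map_add, map_smul, smul_eq_mul]
      exact Or.inl hbdef.symm
    rw [this, div_mul_cancel₀ _ hb, ha]
    ring
  have hφm : MapsTo φ (ball (0:ℂ) 1) {w : E | (L w + c).re < 0} := by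
    intro lam hlam
    have hlam' : ‖lam‖ < 1 := by simpa using hlam
    show (L (φ lam) + c).re < 0
    rw [hφL lam]
    exact hψre lam hlam'
  have hφdiff : DifferentiableOn ℂ φ (ball (0:ℂ) 1) := by
    intro lam hlam
    have hlam' : ‖lam‖ < 1 := by simpa using hlam
    exact ((((hψdiffAt lam hlam').sub_const a).div_const b).smul_const X).const_add z
      |>.differentiableWithinAt
  have hφder : HasDerivAt φ ((((a.re : ℂ) * (-2)) / b) • X) 0 :=
    (((hψder.sub_const a).div_const b).smul_const X).const_add z
  -- compose with f
  have h0mem : (0:ℂ) ∈ ball (0:ℂ) 1 := mem_ball_self one_pos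
  have hzmem : z ∈ {w : E | (L w + c).re < 0} := hz
  have hfz : DifferentiableAt ℂ f z :=
    hfd.differentiableAt ((hs_open L c).mem_nhds hzmem)
  have hF : HasFDerivAt f (fderiv ℂ f z) (φ 0) := hφ0.symm ▸ hfz.hasFDerivAt
  have hgder : HasDerivAt (f ∘ φ) ((fderiv ℂ f z) ((((a.re : ℂ) * (-2)) / b) • X)) 0 :=
    hF.comp_hasDerivAt 0 hφder
  have hgd : DifferentiableOn ℂ (f ∘ φ) (ball (0:ℂ) 1) := hfd.comp hφdiff hφm
  have hgm : MapsTo (f ∘ φ) (ball (0:ℂ) 1) (ball (0:ℂ) 1) := hfm.comp hφm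
  have hbound := schwarz_pick_zero hgd hgm
  rw [hgder.deriv] at hbound
  have hval : (fderiv ℂ f z) ((((a.re : ℂ) * (-2)) / b) • X)
      = (((a.re : ℂ) * (-2)) / b) * fderiv ℂ f z X := by
    rw [map_smul, smul_eq_mul]
  rw [hval, norm_mul] at hbound
  have hnorms : ‖(((a.re : ℂ) * (-2)) / b)‖ = (2 * t) / ‖b‖ := by
    rw [norm_div]
    congr 1
    have : ((a.re : ℂ) * (-2)) = (((a.re * (-2) : ℝ)) : ℂ) := by push_cast; ring
    rw [this, Complex.norm_real, Real.norm_eq_abs, _root_.abs_of_nonneg (by nlinarith)]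
    ring
  rw [hnorms] at hbound
  rw [le_div_iff₀ (by positivity)]
  have h2 : (2 * t) / ‖b‖ * ‖fderiv ℂ f z X‖ ≤ 1 := hbound
  have h3 : 0 ≤ ‖fderiv ℂ f z X‖ := norm_nonneg _
  calc ‖fderiv ℂ f z X‖ * (2 * -(L z + c).re) = 2 * t * ‖fderiv ℂ f z X‖ := by
        rw [htdef, ha]; ring
    _ = (2 * t) / ‖b‖ * ‖fderiv ℂ f z X‖ * ‖b‖ := by
        rw [div_mul_eq_mul_div, div_mul_cancel₀ _ hbpos.ne']
    _ ≤ 1 * ‖b‖ := by apply mul_le_mul_of_nonneg_right h2 (norm_nonneg _)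
    _ = ‖L X‖ := by rw [one_mul, hbdef]

lemma hs_key_norm {u a : ℂ} (hu : u.re < 0) (ha : a.re < 0) :
    ‖u - a‖ < ‖u + (starRingEnd ℂ) a‖ := by
  have key : Complex.normSq (u + (starRingEnd ℂ) a) - Complex.normSq (u - a)
      = 4 * (u.re * a.re) := by
    simp [Complex.normSq_apply]
    ring
  have hpos : Complex.normSq (u - a) < Complex.normSq (u + (starRingEnd ℂ) a) := by
    nlinarith
  have e1 : Complex.normSq (u - a) = ‖u - a‖ ^ 2 := by
    rw [Complex.normSq_eq_norm_sq]
  have e2 : Complex.normSq (u + (starRingEnd ℂ) a) = ‖u + (starRingEnd ℂ) a‖ ^ 2 := by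
    rw [Complex.normSq_eq_norm_sq]
  rw [e1, e2] at hpos
  exact lt_of_pow_lt_pow_left₀ 2 (norm_nonneg _) hpos

lemma hs_extremal (L : E →L[ℂ] ℂ) (c : ℂ) {z X : E} (hz : (L z + c).re < 0) :
    ∃ f : E → ℂ, (DifferentiableOn ℂ f {w : E | (L w + c).re < 0} ∧
      MapsTo f {w : E | (L w + c).re < 0} (ball (0:ℂ) 1)) ∧
      ‖fderiv ℂ f z X‖ = ‖L X‖ / (2 * (-(L z + c).re)) := by
  set a : ℂ := L z + c with ha
  set b : ℂ := L X with hbdef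
  have hare : a.re < 0 := hz
  set f0 : E → ℂ := fun w => (L w - L z) / (L w + (c + (starRingEnd ℂ) a)) with hf0
  have hden : ∀ w : E, w ∈ {w : E | (L w + c).re < 0} → L w + (c + (starRingEnd ℂ) a) ≠ 0 := by
    intro w hw h0
    have hre : (L w + (c + (starRingEnd ℂ) a)).re = (L w + c).re + a.re := by
      simp [Complex.add_re, Complex.conj_re]
      ring
    rw [h0] at hre
    simp at hre
    have hw' : (L w + c).re < 0 := hw
    rw [Complex.add_re] at hw'
    linarith
  have hdiff : DifferentiableOn ℂ f0 {w : E | (L w + c).re < 0} := by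
    intro w hw
    have h1 : DifferentiableAt ℂ (fun w : E => L w - L z) w :=
      (L.differentiable.differentiableAt).sub_const (L z)
    have h2 : DifferentiableAt ℂ (fun w : E => L w + (c + (starRingEnd ℂ) a)) w :=
      (L.differentiable.differentiableAt).add_const _
    have hall : DifferentiableAt ℂ
        (fun y : E => (L y - L z) / (L y + (c + (starRingEnd ℂ) a))) w := by
      simp only [div_eq_mul_inv]
      exact h1.mul (h2.inv (hden w hw))
    rw [hf0]
    exact hall.differentiableWithinAt
  have hmaps : MapsTo f0 {w : E | (L w + c).re < 0} (ball (0:ℂ) 1) := by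
    intro w hw
    have hw' : (L w + c).re < 0 := hw
    have hnum : L w - L z = (L w + c) - a := by rw [ha]; ring
    have hd2 : L w + (c + (starRingEnd ℂ) a) = (L w + c) + (starRingEnd ℂ) a := by ring
    have hkey := hs_key_norm hw' hare
    simp only [mem_ball, dist_zero_right, hf0]
    rw [norm_div, hnum, hd2]
    exact div_lt_one ((norm_nonneg _).trans_lt hkey) |>.mpr hkey
  refine ⟨f0, ⟨hdiff, hmaps⟩, ?_⟩
  -- compute the derivative along the complex line through z in direction X
  have hane : a + (starRingEnd ℂ) a ≠ 0 := by
    rw [Complex.add_conj]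
    intro h0
    have : (2 * a.re : ℝ) = 0 := by exact_mod_cast h0
    linarith
  have hf0z : DifferentiableAt ℂ f0 z := hdiff.differentiableAt ((hs_open L c).mem_nhds hz)
  have hlineder : HasDerivAt (fun lam : ℂ => z + lam • X) X 0 := by
    simpa using ((hasDerivAt_id (0:ℂ)).smul_const X).const_add z
  have hF : HasFDerivAt f0 (fderiv ℂ f0 z) (z + (0:ℂ) • X) := by
    rw [show z + (0:ℂ) • X = z by simp]
    exact hf0z.hasFDerivAt
  have hcomp : HasDerivAt (fun lam : ℂ => f0 (z + lam • X)) (fderiv ℂ f0 z X) 0 :=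
    by have := hF.comp_hasDerivAt 0 hlineder; exact this
  have heq : (fun lam : ℂ => f0 (z + lam • X))
      = fun lam : ℂ => (lam * b) / (lam * b + (a + (starRingEnd ℂ) a)) := by
    funext lam
    have hLw : L (z + lam • X) = L z + lam * b := by
      simp [map_add, map_smul, smul_eq_mul]
      exact Or.inl hbdef.symm
    simp only [hf0, hLw]
    congr 1
    · ring
    · rw [ha]; ring
  rw [heq] at hcomp
  have hg : HasDerivAt (fun lam : ℂ => (lam * b) / (lam * b + (a + (starRingEnd ℂ) a)))
      ((b * ((0:ℂ) * b + (a + (starRingEnd ℂ) a)) - ((0:ℂ) * b) * b)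
        / ((0:ℂ) * b + (a + (starRingEnd ℂ) a)) ^ 2) 0 := by
    have h1 : HasDerivAt (fun lam : ℂ => lam * b) b 0 := by
      simpa using (hasDerivAt_id (0:ℂ)).mul_const b
    have h2 : HasDerivAt (fun lam : ℂ => lam * b + (a + (starRingEnd ℂ) a)) b 0 :=
      h1.add_const _
    exact h1.div h2 (by simpa using hane)
  have hval : fderiv ℂ f0 z X = b / (a + (starRingEnd ℂ) a) := by
    have := hcomp.unique hg
    rw [this]
    simp only [zero_mul, zero_add, sub_zero]
    rw [sq, mul_div_mul_right _ _ hane]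
  rw [hval, norm_div]
  congr 1
  rw [Complex.add_conj, Complex.norm_real, Real.norm_eq_abs,
    _root_.abs_of_nonpos (by linarith), ha]
  ring

lemma hs_line_mem (L : E →L[ℂ] ℂ) (c : ℂ) (z X : E) (lam : ℂ) :
    L (z + lam • X) + c = (L z + c) + lam * L X := by
  simp [map_add, map_smul, smul_eq_mul]
  ring

lemma hs_dirDist_top (L : E →L[ℂ] ℂ) (c : ℂ) {z X : E} (hz : (L z + c).re < 0)
    (hb : L X = 0) : dirDist {w : E | (L w + c).re < 0} z X = ⊤ := by
  rw [dirDist, sSup_eq_top]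
  intro q hq
  refine ⟨ENNReal.ofReal (q.toReal + 1), ⟨q.toReal + 1, by positivity, rfl, ?_⟩, ?_⟩
  · intro lam _
    show (L (z + lam • X) + c).re < 0
    rw [hs_line_mem, hb, mul_zero, add_zero]
    exact hz
  · rw [ENNReal.lt_ofReal_iff_toReal_lt hq.ne]
    linarith

lemma hs_dirDist_ne (L : E →L[ℂ] ℂ) (c : ℂ) {z X : E} (hz : (L z + c).re < 0)
    (hb : L X ≠ 0) :
    dirDist {w : E | (L w + c).re < 0} z X
      = ENNReal.ofReal ((-(L z + c).re) / ‖L X‖) := by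
  set a : ℂ := L z + c with ha
  set b : ℂ := L X with hbdef
  set t : ℝ := -a.re with htdef
  have ht : 0 < t := by simp [htdef]; linarith [show a.re < 0 from hz]
  have hbpos : 0 < ‖b‖ := norm_pos_iff.mpr hb
  set d0 : ℝ := t / ‖b‖ with hd0def
  have hd0 : 0 < d0 := div_pos ht hbpos
  rw [dirDist]
  apply le_antisymm
  · apply sSup_le
    rintro q ⟨r, hr, rfl, hmemr⟩
    apply ENNReal.ofReal_le_ofReal
    by_contra hlt
    push_neg at hlt
    set s : ℝ := (d0 + r) / 2 with hs
    have hs1 : d0 < s := by rw [hs]; linarith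
    have hs2 : s < r := by rw [hs]; linarith
    have hspos : 0 < s := lt_trans hd0 hs1
    set lam : ℂ := (s : ℂ) * (starRingEnd ℂ) b / ((‖b‖ : ℝ) : ℂ) with hlam
    have hnlam : ‖lam‖ = s := by
      rw [hlam, norm_div, norm_mul, Complex.norm_real, RCLike.norm_conj,
        Complex.norm_real, Real.norm_eq_abs, Real.norm_eq_abs,
        _root_.abs_of_nonneg hspos.le, _root_.abs_of_nonneg hbpos.le]
      rw [mul_div_assoc, div_self hbpos.ne', mul_one]
    have hmm : (L (z + lam • X) + c).re < 0 := hmemr lam (by rw [hnlam]; exact hs2)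
    have hlb : lam * b = ((s * ‖b‖ : ℝ) : ℂ) := by
      have habsne : ((‖b‖ : ℝ) : ℂ) ≠ 0 := by exact_mod_cast hbpos.ne'
      have hnsq : Complex.normSq b = ‖b‖ ^ 2 := by
        rw [Complex.normSq_eq_norm_sq]
      have h1 : lam * b = (s : ℂ) * (b * (starRingEnd ℂ) b) / ((‖b‖ : ℝ) : ℂ) := by
        rw [hlam]; ring
      have hreal : s * ‖b‖ ^ 2 / ‖b‖ = s * ‖b‖ := by
        rw [sq, ← mul_assoc, mul_div_assoc, div_self hbpos.ne', mul_one]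
      have h2 : lam * b = ((s * ‖b‖ ^ 2 / ‖b‖ : ℝ) : ℂ) := by
        rw [h1, Complex.mul_conj, hnsq]
        push_cast
        ring
      rw [h2, hreal]
    have hre : (L (z + lam • X) + c).re = a.re + s * ‖b‖ := by
      rw [hs_line_mem, Complex.add_re, hlb, Complex.ofReal_re]
    rw [hre] at hmm
    have : t < s * ‖b‖ := by
      rw [hd0def] at hs1
      calc t = t / ‖b‖ * ‖b‖ := (div_mul_cancel₀ t hbpos.ne').symm
        _ < s * ‖b‖ := by exact mul_lt_mul_of_pos_right hs1 hbpos
    simp [htdef] at hmm this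
    linarith
  · apply le_sSup
    refine ⟨d0, hd0, rfl, fun lam hlam => ?_⟩
    show (L (z + lam • X) + c).re < 0
    rw [hs_line_mem, Complex.add_re]
    have h1 : (lam * b).re ≤ ‖lam * b‖ := by
      exact Complex.re_le_norm _
    have h2 : ‖lam * b‖ < d0 * ‖b‖ := by
      rw [norm_mul]
      exact mul_lt_mul_of_pos_right hlam hbpos
    have h3 : d0 * ‖b‖ = t := by rw [hd0def, div_mul_cancel₀ _ hbpos.ne']
    have h4 : a.re = -t := by rw [htdef]; ring
    rw [← ha, h4]
    linarith

lemma hs_carath_zero' (L : E →L[ℂ] ℂ) (c : ℂ) {z X : E} (hz : (L z + c).re < 0)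
    (hb : L X = 0) {f : E → ℂ}
    (hfd : DifferentiableOn ℂ f {w : E | (L w + c).re < 0})
    (hfm : MapsTo f {w : E | (L w + c).re < 0} (ball (0:ℂ) 1)) :
    fderiv ℂ f z X = 0 := by
  have hmem : ∀ lam : ℂ, z + lam • X ∈ {w : E | (L w + c).re < 0} := by
    intro lam
    show (L (z + lam • X) + c).re < 0
    rw [hs_line_mem, hb, mul_zero, add_zero]
    exact hz
  have hlineder : ∀ lam : ℂ, HasDerivAt (fun μ : ℂ => z + μ • X) X lam := by
    intro lam
    simpa using ((hasDerivAt_id lam).smul_const X).const_add z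
  have hfat : ∀ lam : ℂ, DifferentiableAt ℂ f (z + lam • X) := fun lam =>
    hfd.differentiableAt ((hs_open L c).mem_nhds (hmem lam))
  have hg : Differentiable ℂ (fun lam : ℂ => f (z + lam • X)) := fun lam =>
    (hfat lam).comp lam (hlineder lam).differentiableAt
  have hbd : Bornology.IsBounded (Set.range (fun lam : ℂ => f (z + lam • X))) := by
    apply Bornology.IsBounded.subset (isBounded_ball (x := (0:ℂ)) (r := 1))
    rintro _ ⟨lam, rfl⟩
    exact hfm (hmem lam)
  have hconst := hg.apply_eq_apply_of_bounded hbd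
  have hF : HasFDerivAt f (fderiv ℂ f z) (z + (0:ℂ) • X) := by
    rw [show z + (0:ℂ) • X = z by simp]
    exact (hfd.differentiableAt ((hs_open L c).mem_nhds hz)).hasFDerivAt
  have hder : HasDerivAt (fun lam : ℂ => f (z + lam • X)) (fderiv ℂ f z X) 0 :=
    hF.comp_hasDerivAt 0 (hlineder 0)
  have heqc : (fun lam : ℂ => f (z + lam • X)) = fun _ : ℂ => f (z + (0:ℂ) • X) :=
    funext fun lam => hconst lam 0
  rw [← hder.deriv, heqc, deriv_const]

end HS2

theorem caratheodory_halfspace {n : ℕ} (p ν : EuclideanSpace ℂ (Fin n)) (hν : ν ≠ 0)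
    (z X : EuclideanSpace ℂ (Fin n))
    (hz : z ∈ {w : EuclideanSpace ℂ (Fin n) | (inner ℂ (w - p) ν : ℂ).re < 0}) :
    carath {w : EuclideanSpace ℂ (Fin n) | (inner ℂ (w - p) ν : ℂ).re < 0} z X
      = (2 * dirDist {w : EuclideanSpace ℂ (Fin n) | (inner ℂ (w - p) ν : ℂ).re < 0} z X)⁻¹ := by
  set L : EuclideanSpace ℂ (Fin n) →L[ℂ] ℂ := innerSL ℂ ν with hL
  set cc : ℂ := -(inner ℂ ν p : ℂ) with hcc
  have hmem : ∀ w : EuclideanSpace ℂ (Fin n),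
      ((inner ℂ (w - p) ν : ℂ)).re = (L w + cc).re := by
    intro w
    have h1 : (inner ℂ (w - p) ν : ℂ) = (starRingEnd ℂ) (inner ℂ ν (w - p) : ℂ) :=
      (inner_conj_symm (w - p) ν).symm
    have h2 : (inner ℂ ν (w - p) : ℂ) = L w + cc := by
      rw [inner_sub_right, hL, hcc]
      simp only [innerSL_apply_apply]
      ring
    rw [h1, Complex.conj_re, h2]
  have hSeq : {w : EuclideanSpace ℂ (Fin n) | (inner ℂ (w - p) ν : ℂ).re < 0}
      = {w : EuclideanSpace ℂ (Fin n) | (L w + cc).re < 0} := by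
    ext w
    simp only [mem_setOf_eq, hmem]
  rw [hSeq]
  have hz' : (L z + cc).re < 0 := by
    have h := hz
    simp only [mem_setOf_eq] at h
    rwa [hmem z] at h
  by_cases hb : L X = 0
  · have hcar : carath {w : EuclideanSpace ℂ (Fin n) | (L w + cc).re < 0} z X = 0 := by
      apply le_antisymm _ zero_le
      rw [carath]
      refine iSup₂_le fun f hf => ?_
      rw [hs_carath_zero' L cc hz' hb hf.1 hf.2]
      simp
    rw [hcar, hs_dirDist_top L cc hz' hb, ENNReal.mul_top (by norm_num), ENNReal.inv_top]
  · have hbne : 0 < ‖L X‖ := norm_pos_iff.mpr hb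
    have htpos : 0 < -(L z + cc).re := by linarith
    have hcar : carath {w : EuclideanSpace ℂ (Fin n) | (L w + cc).re < 0} z X
        = ENNReal.ofReal (‖L X‖ / (2 * (-(L z + cc).re))) := by
      apply le_antisymm
      · rw [carath]
        refine iSup₂_le fun f hf => ?_
        exact ENNReal.ofReal_le_ofReal (hs_fderiv_bound L cc hz' hb hf.1 hf.2)
      · obtain ⟨f0, hf0, hval⟩ := hs_extremal L cc (X := X) hz'
        rw [carath]
        exact le_iSup₂_of_le f0 hf0 (by rw [hval])
    rw [hcar, hs_dirDist_ne L cc hz' hb]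
    have h2e : (2:ℝ≥0∞) * ENNReal.ofReal (-(L z + cc).re / ‖L X‖)
        = ENNReal.ofReal (2 * (-(L z + cc).re / ‖L X‖)) := by
      rw [ENNReal.ofReal_mul (by norm_num : (0:ℝ) ≤ 2)]
      congr 1
      exact (ENNReal.ofReal_ofNat 2).symm
    rw [h2e, ← ENNReal.ofReal_inv_of_pos (by positivity)]
    congr 1
    rw [eq_comm, ← mul_div_assoc, inv_div]
end

section
/- If D ⊆ ℂⁿ is a convex domain, then for every z ∈ D and X ∈ ℂⁿ the Carathéodory metric satisfies γ_D(z;X) ≥ 1/(2 d_D(z;X)) (Frankel–Graham estimate). -/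
open Set Metric
open scoped ENNReal

lemma fg_key {n : ℕ} (D : Set (EuclideanSpace ℂ (Fin n)))
    (hD : IsOpen D) (hconv : Convex ℝ D)
    (z X : EuclideanSpace ℂ (Fin n)) (hz : z ∈ D) {r : ℝ} (lam : ℂ)
    (hlr : ‖lam‖ < r) (hp : z + lam • X ∉ D) :
    ENNReal.ofReal (1 / (2 * r)) ≤ carath D z X := by
  obtain ⟨ℓ, hℓ⟩ := geometric_hahn_banach_open_point hconv hD hp
  set L : EuclideanSpace ℂ (Fin n) →L[ℂ] ℂ := ℓ.extendTo𝕜' with hL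
  have hre : ∀ x, (L x).re = ℓ x := by
    intro x
    exact StrongDual.re_extendRCLike_apply (𝕜 := ℂ) ℓ x
  set a : ℝ := ℓ (z + lam • X) - ℓ z with ha_def
  have ha : 0 < a := sub_pos.mpr (hℓ z hz)
  -- basic norm inequality on the half-plane
  have hlt : ∀ s : ℂ, s.re < a → ‖s‖ < ‖s - 2 * a‖ := by
    intro s hs
    have h1 : ‖s‖ ^ 2 = s.re ^ 2 + s.im ^ 2 := by
      rw [Complex.sq_norm, Complex.normSq_apply]; ring
    have h2 : ‖s - 2 * a‖ ^ 2 = (s.re - 2 * a) ^ 2 + s.im ^ 2 := by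
      rw [Complex.sq_norm, Complex.normSq_apply]
      simp [Complex.sub_re, Complex.sub_im]
      ring
    have hsq : ‖s‖ ^ 2 < ‖s - 2 * a‖ ^ 2 := by rw [h1, h2]; nlinarith
    exact lt_of_pow_lt_pow_left₀ 2 (norm_nonneg _) hsq
  -- real part bound on D
  have hwre : ∀ w ∈ D, (L (w - z)).re < a := by
    intro w hw
    rw [map_sub]
    have := hℓ w hw
    simp only [Complex.sub_re, hre]
    linarith [hℓ w hw]
  set g : EuclideanSpace ℂ (Fin n) → ℂ := fun w => L (w - z) with hg
  set ψ : ℂ → ℂ := fun s => s / (s - 2 * a) with hψ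
  set f : EuclideanSpace ℂ (Fin n) → ℂ := ψ ∘ g with hf
  have hgz : g z = 0 := by simp [hg]
  have hgdiff : Differentiable ℂ g := L.differentiable.comp (differentiable_id.sub_const z)
  have hden : ∀ w ∈ D, g w - 2 * a ≠ 0 := by
    intro w hw
    have := hlt (g w) (hwre w hw)
    intro h
    rw [h, norm_zero] at this
    exact absurd this (not_lt.mpr (norm_nonneg _))
  have hfdiff : DifferentiableOn ℂ f D := by
    intro w hw
    refine DifferentiableAt.differentiableWithinAt ?_
    have hψd : DifferentiableAt ℂ ψ (g w) :=
      (differentiableAt_id).div ((differentiableAt_id).sub_const _) (hden w hw)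
    exact hψd.comp w (hgdiff w)
  have hfmaps : MapsTo f D (ball (0:ℂ) 1) := by
    intro w hw
    have h1 := hlt (g w) (hwre w hw)
    have h2 : (0:ℝ) < ‖g w - 2 * a‖ := lt_of_le_of_lt (norm_nonneg _) h1
    simp only [hf, Function.comp, hψ, mem_ball, dist_zero_right]
    rw [norm_div]
    exact (div_lt_one h2).mpr h1
  -- derivative computation
  have hne0 : (0:ℂ) - 2 * a ≠ 0 := by
    simp only [zero_sub, neg_ne_zero]
    exact_mod_cast mul_ne_zero two_ne_zero (ne_of_gt (by exact_mod_cast ha))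
  have hψder : HasDerivAt ψ ((1 * ((0:ℂ) - 2 * a) - 0 * 1) / ((0:ℂ) - 2 * a) ^ 2) 0 := by
    simpa [hψ, Pi.div_def] using (hasDerivAt_id (0:ℂ)).div (d := fun x => id x - 2 * (a:ℂ)) ((hasDerivAt_id (0:ℂ)).sub_const (2 * (a:ℂ))) hne0
  have hgder : HasFDerivAt g L z := by
    have : g = fun w => L w - L z := by ext w; simp [hg, map_sub]
    rw [this]
    exact L.hasFDerivAt.sub_const (L z)
  have hfder : HasFDerivAt f (((1 * ((0:ℂ) - 2 * a) - 0 * 1) / ((0:ℂ) - 2 * a) ^ 2) • L) z :=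
    hψder.comp_hasFDerivAt_of_eq z hgder hgz.symm
  have hc : ((1 * ((0:ℂ) - 2 * a) - 0 * 1) / ((0:ℂ) - 2 * a) ^ 2) = -(1 / (2 * (a:ℂ))) := by
    have : (2 * (a:ℂ)) ≠ 0 := by
      exact_mod_cast mul_ne_zero two_ne_zero (ne_of_gt (by exact_mod_cast ha))
    have ha' : (a:ℂ) ≠ 0 := by exact_mod_cast ha.ne'
    field_simp
    ring
  have hnorm : ‖fderiv ℂ f z X‖ = ‖L X‖ / (2 * a) := by
    rw [hfder.fderiv]
    simp only [ContinuousLinearMap.coe_smul', Pi.smul_apply, hc, smul_eq_mul]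
    rw [norm_mul, norm_neg]
    rw [norm_div, norm_one]
    have : ‖(2 * (a:ℂ))‖ = 2 * a := by
      rw [norm_mul]
      simp [abs_of_pos ha]
    rw [this]
    ring
  -- lower bound for ‖L X‖
  have hare : a = (lam * L X).re := by
    have : L (lam • X) = lam * L X := by rw [map_smul]; simp [smul_eq_mul]
    have h2 : (L (lam • X)).re = ℓ (lam • X) := hre _
    rw [← this]
    rw [h2, ha_def]
    have : ℓ (z + lam • X) = ℓ z + ℓ (lam • X) := by
      rw [map_add]
    rw [this]; ring
  have hLX : a ≤ r * ‖L X‖ := by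
    calc a = (lam * L X).re := hare
      _ ≤ ‖lam * L X‖ := Complex.re_le_norm _
      _ = ‖lam‖ * ‖L X‖ := norm_mul _ _
      _ ≤ r * ‖L X‖ := by
          exact mul_le_mul_of_nonneg_right (le_of_lt hlr) (norm_nonneg _)
  have hr : 0 < r := lt_of_le_of_lt (norm_nonneg lam) hlr
  have hLXpos : 0 < ‖L X‖ := by
    rcases lt_or_ge 0 ‖L X‖ with h | h
    · exact h
    · exfalso
      have h2 : r * ‖L X‖ ≤ 0 := mul_nonpos_of_nonneg_of_nonpos hr.le h
      linarith
  have hfinal : 1 / (2 * r) ≤ ‖fderiv ℂ f z X‖ := by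
    rw [hnorm]
    rw [div_le_div_iff₀ (by linarith) (by linarith)]
    ring_nf
    ring_nf at hLX
    linarith
  calc ENNReal.ofReal (1 / (2 * r)) ≤ ENNReal.ofReal ‖fderiv ℂ f z X‖ :=
        ENNReal.ofReal_le_ofReal hfinal
    _ ≤ carath D z X := le_iSup₂_of_le f ⟨hfdiff, hfmaps⟩ le_rfl

theorem frankel_graham {n : ℕ} (D : Set (EuclideanSpace ℂ (Fin n)))
    (hD : IsOpen D) (hconv : Convex ℝ D) (hne : D.Nonempty)
    (z X : EuclideanSpace ℂ (Fin n)) (hz : z ∈ D) :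
    (2 * dirDist D z X)⁻¹ ≤ carath D z X := by
  refine le_of_forall_lt fun b hb => ?_
  have h1 : 2 * dirDist D z X < b⁻¹ := ENNReal.lt_inv_iff_lt_inv.mp hb
  obtain ⟨s, -, hs1, hs2⟩ := ENNReal.lt_iff_exists_real_btwn.mp h1
  have hspos : 0 < s :=
    ENNReal.ofReal_pos.mp (lt_of_le_of_lt zero_le' hs1)
  set r : ℝ := s / 2 with hr_def
  have hrs : 2 * r = s := by rw [hr_def]; ring
  have hofr : ENNReal.ofReal s = 2 * ENNReal.ofReal r := by
    rw [← hrs, ENNReal.ofReal_mul (by norm_num)]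
    norm_num
  have hdr : dirDist D z X < ENNReal.ofReal r := by
    rw [hofr] at hs1
    exact (ENNReal.mul_lt_mul_iff_right two_ne_zero ENNReal.ofNat_ne_top).mp hs1
  have hex : ∃ lam : ℂ, ‖lam‖ < r ∧ z + lam • X ∉ D := by
    by_contra h
    push_neg at h
    have hrpos : 0 < r := by positivity
    have : ENNReal.ofReal r ≤ dirDist D z X :=
      le_sSup ⟨r, hrpos, rfl, fun lam hl => h lam hl⟩
    exact absurd this (not_le.mpr hdr)
  obtain ⟨lam, hlam, hnot⟩ := hex
  have key := fg_key D hD hconv z X hz lam hlam hnot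
  have hb2 : b < ENNReal.ofReal (1 / (2 * r)) := by
    have h3 : b < (ENNReal.ofReal s)⁻¹ := ENNReal.lt_inv_iff_lt_inv.mp hs2
    have h4 : ENNReal.ofReal (1 / (2 * r)) = (ENNReal.ofReal s)⁻¹ := by
      rw [← ENNReal.ofReal_inv_of_pos hspos, ← hrs, one_div]
    rw [h4]
    exact h3
  exact lt_of_lt_of_le hb2 key
end

section
/- If D ⊆ ℂⁿ is a convex domain, then for every z ∈ D and X ∈ ℂⁿ the Kobayashi metric satisfies 1/(2 d_D(z;X)) ≤ κ_D(z;X) ≤ 1/d_D(z;X), with the convention 1/∞ = 0. -/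
open Set Metric
open scoped ENNReal

set_option linter.unnecessarySeqFocus false

section Aux

open Complex

private lemma abs_lt_of_re_lt {w v : ℂ} (hw : w.re < 0) (hv : v.re < 0) :
    ‖w - v‖ < ‖w + (starRingEnd ℂ) v‖ := by
  have h1 : Complex.normSq (w - v) < Complex.normSq (w + (starRingEnd ℂ) v) := by
    simp only [Complex.normSq_apply, Complex.sub_re, Complex.sub_im, Complex.add_re,
      Complex.add_im, Complex.conj_re, Complex.conj_im]
    nlinarith [mul_pos (neg_pos.2 hw) (neg_pos.2 hv)]
  have h2 : ‖w - v‖ < ‖w + (starRingEnd ℂ) v‖ := by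
    rw [Complex.norm_def, Complex.norm_def]
    exact Real.sqrt_lt_sqrt (Complex.normSq_nonneg _) h1
  exact h2


private lemma halfplane_deriv_bound {h : ℂ → ℂ} {u : ℝ}
    (hd : DifferentiableOn ℂ h (ball 0 1))
    (hm : ∀ ζ ∈ ball (0:ℂ) 1, (h ζ).re < u) :
    ‖deriv h 0‖ ≤ 2 * (u - (h 0).re) := by
  have h0mem : (0:ℂ) ∈ ball (0:ℂ) 1 := by simp
  set a := h 0 with ha
  have hau : a.re < u := hm 0 h0mem
  set Dn : ℂ → ℂ := fun ζ => h ζ + (starRingEnd ℂ) a - 2*u with hDn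
  have hkey : ∀ ζ ∈ ball (0:ℂ) 1, ‖h ζ - a‖ < ‖Dn ζ‖ := by
    intro ζ hζ
    have e1 : h ζ - a = (h ζ - u) - (a - u) := by ring
    have e2 : Dn ζ = (h ζ - u) + (starRingEnd ℂ) (a - u) := by
      simp only [hDn, map_sub, Complex.conj_ofReal]; ring
    rw [e1, e2]
    apply abs_lt_of_re_lt
    · simpa using sub_neg.mpr (hm ζ hζ)
    · simpa using sub_neg.mpr hau
  have hDnne : ∀ ζ ∈ ball (0:ℂ) 1, Dn ζ ≠ 0 := by
    intro ζ hζ hzero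
    have := hkey ζ hζ
    rw [hzero] at this
    simp at this
    exact (norm_nonneg _).not_gt this
  set g : ℂ → ℂ := fun ζ => (h ζ - a) / Dn ζ with hg
  have hgd : DifferentiableOn ℂ g (ball 0 1) := by
    apply DifferentiableOn.div
    · exact hd.sub_const a
    · exact (hd.add_const _).sub_const _
    · exact hDnne
  have hg0 : g 0 = 0 := by simp [hg, ha]
  have hgm : MapsTo g (ball (0:ℂ) 1) (ball (g 0) 1) := by
    rw [hg0]
    intro ζ hζ
    simp only [mem_ball, dist_zero_right, hg, norm_div]
    rw [div_lt_one (norm_pos_iff.2 (hDnne ζ hζ))]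
    exact hkey ζ hζ
  have hschwarz : ‖deriv g 0‖ ≤ 1 := by
    have := Complex.norm_deriv_le_div_of_mapsTo_ball hgd (hgm.mono_right ball_subset_closedBall) one_pos
    simpa using this
  -- compute deriv g 0
  have hhd : DifferentiableAt ℂ h 0 := hd.differentiableAt (isOpen_ball.mem_nhds h0mem)
  have hDn0 : Dn 0 ≠ 0 := hDnne 0 h0mem
  have hder : HasDerivAt g (deriv h 0 / Dn 0) 0 := by
    have hnum : HasDerivAt (fun ζ => h ζ - a) (deriv h 0) 0 :=
      (hhd.hasDerivAt).sub_const a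
    have hden : HasDerivAt Dn (deriv h 0) 0 := by
      have := (hhd.hasDerivAt).add_const ((starRingEnd ℂ) a)
      simpa [hDn] using this.sub_const (2*(u:ℂ))
    have := hnum.div hden hDn0
    refine this.congr_deriv ?_
    simp only [← ha, sub_self, zero_mul, sub_zero]
    rw [pow_two, mul_div_mul_right _ _ hDn0]
  have hgder : deriv g 0 = deriv h 0 / Dn 0 := hder.deriv
  have hDn0val : ‖Dn 0‖ = 2 * (u - a.re) := by
    have he : Dn 0 = ((2*a.re - 2*u : ℝ) : ℂ) := by
      apply Complex.ext <;>
        simp [hDn, ← ha, Complex.sub_re, Complex.add_re, Complex.conj_re, Complex.mul_re,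
          Complex.sub_im, Complex.add_im, Complex.conj_im, Complex.mul_im] <;> ring
    rw [he, Complex.norm_real, Real.norm_eq_abs, abs_of_nonpos (by linarith)]
    ring
  have heq : deriv h 0 = deriv g 0 * Dn 0 := by
    rw [hgder]; field_simp
  have : ‖deriv h 0‖ = ‖deriv g 0‖ * ‖Dn 0‖ := by rw [heq, norm_mul]
  rw [this, hDn0val]
  nlinarith [norm_nonneg (deriv g 0), hschwarz, sub_pos.2 hau]

private lemma convex_halfderiv {E : Type*} [NormedAddCommGroup E] [NormedSpace ℂ E]
    (D : Set E) (hD : IsOpen D) (hconv : Convex ℝ D)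
    (φ : ℂ → E) (hφd : DifferentiableOn ℂ φ (ball 0 1))
    (hφm : MapsTo φ (ball (0:ℂ) 1) D) (μ : ℂ) (hμ : ‖μ‖ < 1/2) :
    φ 0 + μ • (fderiv ℂ φ 0 1) ∈ D := by
  by_contra hnot
  set v := fderiv ℂ φ 0 1 with hv
  obtain ⟨f, hf⟩ := geometric_hahn_banach_open_point hconv hD hnot
  set u := f (φ 0 + μ • v) with hu
  set L : E →L[ℂ] ℂ := f.extendTo𝕜' with hL
  have hre : ∀ w : E, (L w).re = f w := by
    intro w
    rw [hL]; exact StrongDual.re_extendRCLike_apply (𝕜 := ℂ) f w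
  have h0mem : (0:ℂ) ∈ ball (0:ℂ) 1 := by simp
  set h : ℂ → ℂ := fun ζ => L (φ ζ) with hh
  have hhd : DifferentiableOn ℂ h (ball 0 1) :=
    L.differentiable.comp_differentiableOn hφd
  have hhm : ∀ ζ ∈ ball (0:ℂ) 1, (h ζ).re < u := by
    intro ζ hζ
    rw [hh]; simp only []
    rw [hre]
    exact hf _ (hφm hζ)
  have hφ0d : DifferentiableAt ℂ φ 0 := hφd.differentiableAt (isOpen_ball.mem_nhds h0mem)
  have hderh : deriv h 0 = L v := by
    have : HasDerivAt h (L v) 0 := by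
      have := (L.hasFDerivAt (x := φ 0)).comp 0 hφ0d.hasFDerivAt
      have h2 : HasFDerivAt h (L.comp (fderiv ℂ φ 0)) 0 := this
      have := h2.hasDerivAt
      simpa [hv] using this
    exact this.deriv
  have hbound : ‖L v‖ ≤ 2 * (u - f (φ 0)) := by
    have := halfplane_deriv_bound hhd hhm
    rw [hderh] at this
    rwa [show (h 0).re = f (φ 0) by rw [hh]; exact hre _] at this
  have hfz : f (φ 0) < u := hf _ (hφm h0mem)
  have hsplit : u = f (φ 0) + (L (μ • v)).re := by
    rw [hre, hu, map_add]
  have hLsmul : L (μ • v) = μ * L v := by simp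
  have hest : (L (μ • v)).re ≤ ‖μ‖ * ‖L v‖ := by
    calc (L (μ • v)).re ≤ ‖L (μ • v)‖ := Complex.re_le_norm _
    _ = ‖μ‖ * ‖L v‖ := by rw [hLsmul, norm_mul]
  have ht : 0 < u - f (φ 0) := sub_pos.2 hfz
  have h1 : ‖μ‖ * ‖L v‖ ≤ ‖μ‖ * (2 * (u - f (φ 0))) :=
    mul_le_mul_of_nonneg_left hbound (norm_nonneg μ)
  have h2 : ‖μ‖ * (2 * (u - f (φ 0))) < (1/2) * (2 * (u - f (φ 0))) :=
    mul_lt_mul_of_pos_right hμ (by linarith)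
  linarith

end Aux

theorem kobayashi_convex_bounds {n : ℕ} (D : Set (EuclideanSpace ℂ (Fin n)))
    (hD : IsOpen D) (hconv : Convex ℝ D) (hne : D.Nonempty)
    (z X : EuclideanSpace ℂ (Fin n)) (hz : z ∈ D) :
    (2 * dirDist D z X)⁻¹ ≤ kob D z X ∧ kob D z X ≤ (dirDist D z X)⁻¹ := by
  constructor
  · -- lower bound
    rw [kob]
    refine le_sInf ?_
    rintro c ⟨α, rfl, φ, hφd, hφm, hφ0, hα⟩
    by_cases hα0 : α = 0
    · have hX : X = 0 := by rw [← hα, hα0, zero_smul]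
      have hd : dirDist D z X = ⊤ := by
        refine ENNReal.eq_top_of_forall_nnreal_le fun s => ?_
        calc (s : ℝ≥0∞) = ENNReal.ofReal s := ENNReal.ofReal_coe_nnreal.symm
        _ ≤ ENNReal.ofReal ((s:ℝ) + 1) := ENNReal.ofReal_le_ofReal (by linarith [s.coe_nonneg])
        _ ≤ dirDist D z X := le_sSup ⟨(s:ℝ)+1, by positivity, rfl,
            fun lam _ => by simpa [hX] using hz⟩
      rw [hd]
      simp
    · have hαpos : 0 < ‖α‖ := norm_pos_iff.2 hα0
      set r : ℝ := 1/(2*‖α‖) with hr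
      have hrpos : 0 < r := by positivity
      have hclaim : ∀ lam : ℂ, ‖lam‖ < r → z + lam • X ∈ D := by
        intro lam hlam
        have hμ : ‖lam * α‖ < 1/2 := by
          rw [norm_mul]
          calc ‖lam‖ * ‖α‖ < r * ‖α‖ := mul_lt_mul_of_pos_right hlam hαpos
          _ = 1/2 := by rw [hr]; rw [div_mul_eq_mul_div, div_eq_div_iff (by positivity) (by norm_num)]; ring
        have := convex_halfderiv D hD hconv φ hφd hφm (lam*α) hμ
        rw [hφ0] at this
        rwa [show (lam*α) • (fderiv ℂ φ 0 1) = lam • X by rw [← hα, smul_smul]] at this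
      have hdge : ENNReal.ofReal r ≤ dirDist D z X := le_sSup ⟨r, hrpos, rfl, hclaim⟩
      have h2d : ENNReal.ofReal (‖α‖⁻¹) ≤ 2 * dirDist D z X := by
        calc ENNReal.ofReal (‖α‖⁻¹) = ENNReal.ofReal (2*r) := by
              rw [hr]; congr 1
              field_simp
        _ = ENNReal.ofReal 2 * ENNReal.ofReal r := ENNReal.ofReal_mul (by norm_num)
        _ ≤ 2 * dirDist D z X := by
              rw [show ENNReal.ofReal 2 = (2:ℝ≥0∞) by simp [ENNReal.ofReal_ofNat]]
              exact mul_le_mul_right hdge _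
      calc (2 * dirDist D z X)⁻¹ ≤ (ENNReal.ofReal (‖α‖⁻¹))⁻¹ := ENNReal.inv_le_inv' h2d
      _ = ENNReal.ofReal ‖α‖ := by
            rw [ENNReal.ofReal_inv_of_pos hαpos, inv_inv]
  · -- upper bound
    rw [ENNReal.le_inv_iff_le_inv, dirDist]
    refine sSup_le ?_
    rintro c ⟨r, hrpos, rfl, hprop⟩
    rw [← ENNReal.le_inv_iff_le_inv, ← ENNReal.ofReal_inv_of_pos hrpos, kob]
    apply sInf_le
    refine ⟨(r:ℂ)⁻¹, by rw [norm_inv, Complex.norm_real, Real.norm_eq_abs, abs_of_pos hrpos],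
      fun ζ => z + ζ • ((r:ℂ) • X), ?_, ?_, by simp, ?_⟩
    · exact ((differentiable_id.smul_const _).const_add z).differentiableOn
    · intro ζ hζ
      show z + ζ • ((r:ℂ) • X) ∈ D
      rw [smul_smul]
      apply hprop
      rw [norm_mul, Complex.norm_real, Real.norm_eq_abs, abs_of_pos hrpos]
      have h1 : ‖ζ‖ < 1 := by simpa using hζ
      calc ‖ζ‖ * r < 1 * r := mul_lt_mul_of_pos_right h1 hrpos
      _ = r := one_mul r
    · have hder : HasDerivAt (fun ζ : ℂ => z + ζ • ((r:ℂ) • X)) ((r:ℂ) • X) 0 := by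
        simpa using ((hasDerivAt_id (0:ℂ)).smul_const ((r:ℂ) • X)).const_add z
      rw [show (fderiv ℂ (fun ζ:ℂ => z + ζ • ((r:ℂ) • X)) 0) 1 = (r:ℂ) • X from by
        rw [fderiv_apply_one_eq_deriv]; exact hder.deriv]
      rw [smul_smul, inv_mul_cancel₀ (by exact_mod_cast hrpos.ne'), one_smul]
end
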